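/- For α ∈ (0,1) and fixed j with 1 ≤ j ≤ n−1, the graded-grid weight b̂_{n,j} = φ_{n,j}(α,r) − φ_{n,j+1}(α,r), where φ_{n,j}(α,r) = ((n^r−(j−1)^r)^{α+1} − (n^r−j^r)^{α+1})/(j^r−(j−1)^r), is nonnegative for every real r ≥ 1. -/

import Mathlib

/-- Interior weights of the product-integration trapezoidal rule on a graded
mesh: for `α ∈ (0,1)`, `r ≥ 1`, and `1 ≤ j ≤ n−1`, the weight
`b̂_{n,j} = φ_{n,j}(α,r) − φ_{n,j+1}(α,r)` with
`φ_{n,j} = ((n^r−(j−1)^r)^{α+1} − (n^r−j^r)^{α+1})/(j^r−(j−1)^r)`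
is nonnegative. -/
theorem graded_weights_nonneg (α r : ℝ) (hα : 0 < α) (hα1 : α < 1) (hr : 1 ≤ r)
    (n j : ℕ) (hj : 1 ≤ j) (hjn : j ≤ n - 1) (hn : 1 ≤ n)
    (φ : ℕ → ℝ)
    (hφ : ∀ i : ℕ, φ i =
      (((n : ℝ) ^ r - ((i : ℝ) - 1) ^ r) ^ (α + 1) - ((n : ℝ) ^ r - (i : ℝ) ^ r) ^ (α + 1)) /
        ((i : ℝ) ^ r - ((i : ℝ) - 1) ^ r)) :
    0 ≤ φ j - φ (j + 1) := by
  have hr0 : (0:ℝ) < r := lt_of_lt_of_le one_pos hr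
  have hjn' : j + 1 ≤ n := by omega
  have hj1 : (1:ℝ) ≤ (j:ℝ) := by exact_mod_cast hj
  have hjn1 : (j:ℝ) + 1 ≤ (n:ℝ) := by exact_mod_cast hjn'
  set N : ℝ := (n:ℝ) ^ r with hNdef
  set a : ℝ := ((j:ℝ) - 1) ^ r with hadef
  set b : ℝ := (j:ℝ) ^ r with hbdef
  set c : ℝ := ((j:ℝ) + 1) ^ r with hcdef
  have hab : a < b := Real.rpow_lt_rpow (by linarith) (by linarith) hr0
  have hbc : b < c := Real.rpow_lt_rpow (by linarith) (by linarith) hr0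
  have haN : a ∈ Set.Iic N :=
    Real.rpow_le_rpow (by linarith) (by linarith) (le_of_lt hr0)
  have hcN : c ∈ Set.Iic N :=
    Real.rpow_le_rpow (by linarith) (by linarith) (le_of_lt hr0)
  have hconv : ConvexOn ℝ (Set.Iic N) (fun x : ℝ => (N - x) ^ (α + 1)) := by
    have h1 : ConvexOn ℝ (Set.Ici (0:ℝ)) (fun x : ℝ => x ^ (α + 1)) :=
      convexOn_rpow (by linarith : (1:ℝ) ≤ α + 1)
    have hmap : ∀ t : ℝ, (AffineMap.lineMap N (N - 1) : ℝ →ᵃ[ℝ] ℝ) t = N - t := by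
      intro t
      simp [AffineMap.lineMap_apply]
      ring
    have h2 := h1.comp_affineMap (AffineMap.lineMap N (N - 1) : ℝ →ᵃ[ℝ] ℝ)
    have hset : (AffineMap.lineMap N (N - 1) : ℝ →ᵃ[ℝ] ℝ) ⁻¹' (Set.Ici 0) = Set.Iic N := by
      ext t
      simp only [Set.mem_preimage, Set.mem_Ici, Set.mem_Iic, hmap t, sub_nonneg]
    rw [hset] at h2
    refine h2.congr (fun t _ => ?_)
    simp [Function.comp, hmap t]
  have hslope := hconv.slope_mono_adjacent haN hcN hab hbc
  have e1 : φ j = ((N - a) ^ (α + 1) - (N - b) ^ (α + 1)) / (b - a) := by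
    rw [hφ j]
  have e2 : φ (j + 1) = ((N - b) ^ (α + 1) - (N - c) ^ (α + 1)) / (c - b) := by
    rw [hφ (j + 1)]
    push_cast
    rw [add_sub_cancel_right]
  rw [e1, e2]
  have r1 : ((N - a) ^ (α + 1) - (N - b) ^ (α + 1)) / (b - a)
      = -(((N - b) ^ (α + 1) - (N - a) ^ (α + 1)) / (b - a)) := by
    rw [← neg_div, neg_sub]
  have r2 : ((N - b) ^ (α + 1) - (N - c) ^ (α + 1)) / (c - b)
      = -(((N - c) ^ (α + 1) - (N - b) ^ (α + 1)) / (c - b)) := by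
    rw [← neg_div, neg_sub]
  rw [r1, r2]
  linarith [hslope]
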